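/- Let M : Fin n → Fin m → Bool. Define a directed graph H on Fin n ⊕ Fin m with edges: inl i → inl i' whenever i < i'; inr p → inr p' whenever p < p'; inl i → inr p whenever M i p = true (constraint C1); and inr p → inl j whenever there exist i < j and q > p with M i p = true, M j p = false, and M j q = true (constraint C2). If H is acyclic (its edge relation has no directed cycle), then there exists a Stick order for M, i.e., strictly monotone ra : Fin n → ℕ and rb : Fin m → ℕ with disjoint ranges such that for all j, p: M j p = true ↔ (ra j < rb p ∧ (∃ q ≥ p, M j q = true) ∧ (∃ i ≤ j, M i p = true)). -/

import Mathlib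

def StickOrder {n m : ℕ} (M : Fin n → Fin m → Bool) : Prop :=
  ∃ (ra : Fin n → ℕ) (rb : Fin m → ℕ),
    StrictMono ra ∧ StrictMono rb ∧ (∀ i p, ra i ≠ rb p) ∧
    ∀ j p, M j p = true ↔
      (ra j < rb p ∧ (∃ q, p ≤ q ∧ M j q = true) ∧ (∃ i, i ≤ j ∧ M i p = true))

def HEdge {n m : ℕ} (M : Fin n → Fin m → Bool) :
    Fin n ⊕ Fin m → Fin n ⊕ Fin m → Prop
  | Sum.inl i, Sum.inl i' => i < i'
  | Sum.inr p, Sum.inr p' => p < p'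
  | Sum.inl i, Sum.inr p => M i p = true
  | Sum.inr p, Sum.inl j =>
      ∃ i, i < j ∧ ∃ q, p < q ∧ M i p = true ∧ M j p = false ∧ M j q = true

def P1 {n m : ℕ} (M : Fin n → Fin m → Bool) : Prop :=
  ∃ i j k : Fin n, i < j ∧ j < k ∧ ∃ p q r : Fin m, p < q ∧ q < r ∧
    M i q = true ∧ M j q = false ∧ M j r = true ∧ M k p = true

def P2 {n m : ℕ} (M : Fin n → Fin m → Bool) : Prop :=
  ∃ i j k : Fin n, i < j ∧ j < k ∧ ∃ p q : Fin m, p < q ∧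
    M i p = true ∧ M j p = false ∧ M j q = true ∧ M k p = true

def P3 {n m : ℕ} (M : Fin n → Fin m → Bool) : Prop :=
  ∃ i j : Fin n, i < j ∧ ∃ p q r : Fin m, p < q ∧ q < r ∧
    M i q = true ∧ M j p = true ∧ M j q = false ∧ M j r = true

theorem stmt_1 {n m : ℕ} (M : Fin n → Fin m → Bool)
    (hacyc : ¬ ∃ v, Relation.TransGen (HEdge M) v v) :
    StickOrder M := by
  classical
  let s : (Fin n ⊕ Fin m) → (Fin n ⊕ Fin m) → Prop :=
    fun a b => a = b ∨ Relation.TransGen (HEdge M) a b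
  haveI : IsRefl (Fin n ⊕ Fin m) s := ⟨fun a => Or.inl rfl⟩
  haveI : IsTrans (Fin n ⊕ Fin m) s := by
    constructor
    rintro a b c (rfl | hab) hbc
    · exact hbc
    rcases hbc with rfl | hbc
    · exact Or.inr hab
    · exact Or.inr (hab.trans hbc)
  haveI : IsAntisymm (Fin n ⊕ Fin m) s := by
    constructor
    rintro a b (rfl | hab) hba
    · rfl
    rcases hba with rfl | hba
    · rfl
    · exact absurd ⟨a, hab.trans hba⟩ hacyc
  haveI : IsPreorder (Fin n ⊕ Fin m) s := ⟨⟩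
  haveI hs : IsPartialOrder (Fin n ⊕ Fin m) s := ⟨⟩
  obtain ⟨t, ht, hst⟩ := extend_partialOrder s
  haveI := ht
  have ttrans : ∀ {a b c}, t a b → t b c → t a c := fun h1 h2 => IsTrans.trans _ _ _ h1 h2
  have tanti : ∀ {a b}, t a b → t b a → a = b := fun h1 h2 => Std.Antisymm.antisymm _ _ h1 h2
  have ttotal : ∀ a b, t a b ∨ t b a := fun a b => Std.Total.total a b
  let f : (Fin n ⊕ Fin m) → ℕ :=
    fun v => (Finset.univ.filter (fun w => t w v ∧ w ≠ v)).card
  have fmono : ∀ {a b}, t a b → a ≠ b → f a < f b := by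
    intro a b hab hne
    apply Finset.card_lt_card
    constructor
    · intro w hw
      simp only [Finset.mem_filter, Finset.mem_univ, true_and] at hw ⊢
      refine ⟨ttrans hw.1 hab, ?_⟩
      rintro rfl
      exact hne (tanti hab hw.1)
    · intro hsub
      have : a ∈ Finset.univ.filter (fun w => t w b ∧ w ≠ b) := by
        simp only [Finset.mem_filter, Finset.mem_univ, true_and]
        exact ⟨hab, hne⟩
      have := hsub this
      simp only [Finset.mem_filter] at this
      exact this.2.2 rfl
  have hedge : ∀ {a b}, HEdge M a b → f a < f b := by
    intro a b h
    have hne : a ≠ b := by rintro rfl; exact hacyc ⟨a, Relation.TransGen.single h⟩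
    exact fmono (hst _ _ (Or.inr (Relation.TransGen.single h))) hne
  have finj : ∀ {a b}, f a = f b → a = b := by
    intro a b hfe
    by_contra hne
    rcases ttotal a b with h | h
    · exact absurd hfe (Nat.ne_of_lt (fmono h hne))
    · exact absurd hfe.symm (Nat.ne_of_lt (fmono h (Ne.symm hne)))
  refine ⟨fun i => f (Sum.inl i), fun p => f (Sum.inr p), ?_, ?_, ?_, ?_⟩
  · intro i i' hii'
    exact hedge (show HEdge M (Sum.inl i) (Sum.inl i') from hii')
  · intro p p' hpp'
    exact hedge (show HEdge M (Sum.inr p) (Sum.inr p') from hpp')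
  · intro i p h
    exact Sum.inl_ne_inr (finj h)
  · intro j p
    constructor
    · intro h
      exact ⟨hedge (show HEdge M (Sum.inl j) (Sum.inr p) from h),
        ⟨p, le_refl _, h⟩, ⟨j, le_refl _, h⟩⟩
    · rintro ⟨hlt, ⟨q, hpq, hjq⟩, ⟨i, hij, hip⟩⟩
      by_contra hM
      have hMf : M j p = false := by
        cases h : M j p with
        | false => rfl
        | true => exact absurd h hM
      have hpq' : p < q := lt_of_le_of_ne hpq (by rintro rfl; rw [hMf] at hjq; exact Bool.noConfusion hjq)
      have hij' : i < j := lt_of_le_of_ne hij (by rintro rfl; rw [hMf] at hip; exact Bool.noConfusion hip)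
      have : f (Sum.inr p) < f (Sum.inl j) :=
        hedge (show HEdge M (Sum.inr p) (Sum.inl j) from ⟨i, hij', q, hpq', hip, hMf, hjq⟩)
      exact Nat.lt_asymm this hlt
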